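/- In the witness-repair step (second case): suppose |E_W(S,S̄)| + r(S) ≥ ψ(vol_W(S)+r(S)), r'(S) > (1/2)r(S), and vol_W(S) + r(S) ≥ (ψ/3)(vol_{W'}(S) + r'(S)). Then |E_{W'}(S,S̄)| + r'(S) ≥ (ψ²/6)(vol_{W'}(S) + r'(S)), where W' ⊇ W. -/

import Mathlib

open Finset

variable {V : Type*} [Fintype V] [DecidableEq V]

/-- Number of edges of the multigraph `G` with tail in `S` and head outside `S`. -/
def cutE (G : Multiset (V × V)) (S : Finset V) : ℕ :=
  (G.filter (fun e => e.1 ∈ S ∧ e.2 ∉ S)).card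

/-- Degree of a vertex in the multigraph `G` (a self-loop counts twice). -/
def deg (G : Multiset (V × V)) (v : V) : ℕ :=
  (G.filter (fun e => e.1 = v)).card + (G.filter (fun e => e.2 = v)).card

/-- Volume of a vertex set. -/
def vol (G : Multiset (V × V)) (S : Finset V) : ℕ := ∑ v ∈ S, deg G v

omit [Fintype V] in
lemma cutE_mono' (W W' : Multiset (V × V)) (h : W ≤ W') (S : Finset V) :
    cutE W S ≤ cutE W' S :=
  Multiset.card_le_card (Multiset.filter_le_filter _ h)

/-- Witness repair, second case: if `W ⊆ W'`, `|E_W(S,S̄)| + r(S) ≥ ψ(vol_W(S)+r(S))`,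
`r'(S) > (1/2)r(S)`, and `vol_W(S)+r(S) ≥ (ψ/3)(vol_{W'}(S)+r'(S))`, then
`|E_{W'}(S,S̄)| + r'(S) ≥ (ψ²/6)(vol_{W'}(S)+r'(S))`. -/
theorem stmt9 (W W' : Multiset (V × V)) (hsub : W ≤ W') (S : Finset V)
    (r r' : V → ℕ) (ψ : ℝ) (hψ0 : 0 < ψ) (hψ1 : ψ < 1)
    (ha : ψ * ((vol W S : ℝ) + ∑ v ∈ S, (r v : ℝ)) ≤ (cutE W S : ℝ) + ∑ v ∈ S, (r v : ℝ))
    (hr : (1 / 2) * (∑ v ∈ S, (r v : ℝ)) < ∑ v ∈ S, (r' v : ℝ))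
    (hvol : (ψ / 3) * ((vol W' S : ℝ) + ∑ v ∈ S, (r' v : ℝ))
      ≤ (vol W S : ℝ) + ∑ v ∈ S, (r v : ℝ)) :
    (ψ ^ 2 / 6) * ((vol W' S : ℝ) + ∑ v ∈ S, (r' v : ℝ))
      ≤ (cutE W' S : ℝ) + ∑ v ∈ S, (r' v : ℝ) := by
  have hc : (cutE W S : ℝ) ≤ (cutE W' S : ℝ) := by
    exact_mod_cast cutE_mono' W W' hsub S
  have hcv : (cutE W S : ℝ) ≤ (vol W S : ℝ) := by
    have : cutE W S ≤ vol W S := by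
      unfold cutE vol deg
      calc (W.filter (fun e => e.1 ∈ S ∧ e.2 ∉ S)).card
          ≤ ∑ v ∈ S, (W.filter (fun e => e.1 = v)).card := by
            rw [show (∑ v ∈ S, Multiset.card (Multiset.filter (fun e => e.1 = v) W))
                = Multiset.card (∑ v ∈ S, Multiset.filter (fun e => e.1 = v) W) from
                (Multiset.card_sum _ _).symm]
            apply Multiset.card_le_card
            rw [Multiset.le_iff_count]
            intro e
            rw [Multiset.count_sum']
            simp only [Multiset.count_filter]
            by_cases h : e.1 ∈ S ∧ e.2 ∉ S
            · rw [if_pos h]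
              calc Multiset.count e W
                  = if e.1 = e.1 then Multiset.count e W else 0 := by simp
                _ ≤ ∑ x ∈ S, if e.1 = x then Multiset.count e W else 0 :=
                    Finset.single_le_sum (f := fun x => if e.1 = x then Multiset.count e W else 0)
                      (fun _ _ => by positivity) h.1
            · rw [if_neg h]; exact Nat.zero_le _
        _ ≤ ∑ v ∈ S, ((W.filter (fun e => e.1 = v)).card + (W.filter (fun e => e.2 = v)).card) := by
            exact Finset.sum_le_sum fun v _ => Nat.le_add_right _ _
    exact_mod_cast this
  have hrS : (0:ℝ) ≤ ∑ v ∈ S, (r v : ℝ) := Finset.sum_nonneg fun _ _ => Nat.cast_nonneg _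
  nlinarith [mul_le_mul_of_nonneg_left hvol (le_of_lt hψ0)]
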